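/- Let P = {p_1,...,p_n} be n points in R^d with ‖p_i‖ ≤ 1 for every i, let w ∈ [0,1]^n be a distribution vector (Σ_i w_i = 1), and let ε ∈ (0,1). Then there exists a distribution vector ũ ∈ [0,1]^n with at most 8/ε non-zero entries such that ‖Σ_i (w_i − ũ_i) p_i‖² ≤ ε. -/

import Mathlib

open scoped BigOperators

set_option maxHeartbeats 1600000 in
theorem stmt7 {d n : ℕ} (p : Fin n → EuclideanSpace ℝ (Fin d))
    (hp : ∀ i, ‖p i‖ ≤ 1) (w : Fin n → ℝ)
    (hw0 : ∀ i, 0 ≤ w i) (hw1 : ∑ i, w i = 1)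
    (ε : ℝ) (hε : ε ∈ Set.Ioo (0 : ℝ) 1) :
    ∃ u : Fin n → ℝ, (∀ i, 0 ≤ u i) ∧ (∀ i, u i ≤ 1) ∧ (∑ i, u i = 1) ∧
      ((Finset.univ.filter fun i => u i ≠ 0).card : ℝ) ≤ 8 / ε ∧
      ‖∑ i, (w i - u i) • p i‖ ^ 2 ≤ ε := by
  obtain ⟨hε0, hε1⟩ := hε
  set μ : EuclideanSpace ℝ (Fin d) := ∑ i, w i • p i with hμ
  have hμnorm : ‖μ‖ ≤ 1 := by
    rw [hμ]
    calc ‖∑ i, w i • p i‖ ≤ ∑ i, ‖w i • p i‖ := norm_sum_le _ _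
    _ ≤ ∑ i, w i := by
        refine Finset.sum_le_sum fun i _ => ?_
        rw [norm_smul, Real.norm_eq_abs, abs_of_nonneg (hw0 i)]
        nlinarith [hp i, norm_nonneg (p i), hw0 i]
    _ = 1 := hw1
  clear_value μ
  have hex : ∃ i, 0 < w i := by
    by_contra h
    push_neg at h
    have : ∑ i, w i ≤ 0 := Finset.sum_nonpos (fun i _ => h i)
    linarith
  have key : ∀ t : ℕ, 1 ≤ t → ∃ u : Fin n → ℝ,
      (∀ i, 0 ≤ u i) ∧ (∑ i, u i = 1) ∧
      ((Finset.univ.filter fun i => u i ≠ 0).card ≤ t) ∧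
      ‖(∑ i, u i • p i) - μ‖ ^ 2 ≤ 4 / t := by
    intro t ht
    induction t with
    | zero => omega
    | succ t ih =>
      rcases Nat.lt_or_ge t 1 with h1 | h1
      · -- base case: t = 0
        interval_cases t
        obtain ⟨i0, hi0⟩ := hex
        refine ⟨fun i => if i = i0 then 1 else 0, fun i => by positivity, ?_, ?_, ?_⟩
        · simp
        · have : (Finset.univ.filter fun i => (if i = i0 then (1:ℝ) else 0) ≠ 0) = {i0} := by
            ext i
            simp only [Finset.mem_filter, Finset.mem_univ, true_and, Finset.mem_singleton]
            by_cases h : i = i0 <;> simp [h]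
          rw [this, Finset.card_singleton]
        · have hps : (∑ i, (if i = i0 then (1:ℝ) else 0) • p i) = p i0 := by
            rw [Finset.sum_eq_single i0]
            · simp
            · intro b _ hb; simp [hb]
            · intro h; exact absurd (Finset.mem_univ i0) h
          have h2 : ‖(∑ i, (if i = i0 then (1:ℝ) else 0) • p i) - μ‖ ≤ 2 := by
            rw [hps]
            calc ‖p i0 - μ‖ ≤ ‖p i0‖ + ‖μ‖ := norm_sub_le _ _
            _ ≤ 2 := by linarith [hp i0]
          have h3 : (0:ℝ) ≤ ‖(∑ i, (if i = i0 then (1:ℝ) else 0) • p i) - μ‖ := norm_nonneg _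
          push_cast
          nlinarith
      · obtain ⟨u, hu0, hu1, hcard, hnorm⟩ := ih h1
        set q : EuclideanSpace ℝ (Fin d) := ∑ i, u i • p i with hq
        clear_value q
        have hsum0 : ∑ i, w i * inner ℝ (q - μ) (p i - μ) = (0:ℝ) := by
          have hz : ∑ i, w i • (p i - μ) = (0 : EuclideanSpace ℝ (Fin d)) := by
            simp only [smul_sub, Finset.sum_sub_distrib, ← hμ, ← Finset.sum_smul, hw1, one_smul,
              sub_self]
          calc ∑ i, w i * inner ℝ (q - μ) (p i - μ)
              = inner ℝ (q - μ) (∑ i, w i • (p i - μ)) := by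
                rw [inner_sum]
                exact Finset.sum_congr rfl fun i _ => (real_inner_smul_right _ _ _).symm
          _ = 0 := by rw [hz, inner_zero_right]
        have hj : ∃ j, inner ℝ (q - μ) (p j - μ) ≤ (0:ℝ) := by
          by_contra h
          push_neg at h
          obtain ⟨i0, hi0⟩ := hex
          have hpos : (0:ℝ) < ∑ i, w i * inner ℝ (q - μ) (p i - μ) := by
            refine Finset.sum_pos' (fun i _ => ?_) ⟨i0, Finset.mem_univ i0, ?_⟩
            · exact mul_nonneg (hw0 i) (le_of_lt (h i))
            · exact mul_pos hi0 (h i0)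
          linarith [hsum0]
        obtain ⟨j, hjle⟩ := hj
        have htpos : (0:ℝ) < (t:ℝ) := by exact_mod_cast h1
        set γ : ℝ := 1 / ((t:ℝ) + 1) with hγ
        have hγpos : 0 < γ := by positivity
        have hγle : γ ≤ 1 := by
          rw [hγ, div_le_one (by positivity)]
          linarith
        clear_value γ
        refine ⟨fun i => (1 - γ) * u i + (if i = j then γ else 0), ?_, ?_, ?_, ?_⟩
        · intro i
          have h01 : 0 ≤ 1 - γ := by linarith
          have h2 : 0 ≤ (1 - γ) * u i := mul_nonneg h01 (hu0 i)
          show 0 ≤ (1 - γ) * u i + if i = j then γ else 0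
          split_ifs <;> linarith
        · rw [Finset.sum_add_distrib, ← Finset.mul_sum, hu1, Finset.sum_ite_eq']
          simp
        · have hsub : (Finset.univ.filter fun i => ((1 - γ) * u i + (if i = j then γ else 0)) ≠ 0)
              ⊆ insert j (Finset.univ.filter fun i => u i ≠ 0) := by
            intro i hi
            simp only [Finset.mem_filter, Finset.mem_univ, true_and] at hi
            simp only [Finset.mem_insert, Finset.mem_filter, Finset.mem_univ, true_and]
            by_contra hc
            push_neg at hc
            obtain ⟨hij, hui⟩ := hc
            simp [hij, hui] at hi
          calc _ ≤ (insert j (Finset.univ.filter fun i => u i ≠ 0)).card :=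
                Finset.card_le_card hsub
          _ ≤ (Finset.univ.filter fun i => u i ≠ 0).card + 1 := Finset.card_insert_le _ _
          _ ≤ t + 1 := by omega
        · have hqsum : (∑ i, ((1 - γ) * u i + (if i = j then γ else 0)) • p i)
              = (1 - γ) • q + γ • p j := by
            simp only [add_smul, Finset.sum_add_distrib]
            congr 1
            · rw [hq, Finset.smul_sum]
              exact Finset.sum_congr rfl fun i _ => by rw [mul_smul]
            · rw [Finset.sum_eq_single j]
              · simp
              · intro b _ hb; simp [hb]
              · intro h; exact absurd (Finset.mem_univ j) h
          have hdecomp : (∑ i, ((1 - γ) * u i + (if i = j then γ else 0)) • p i) - μ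
              = (1 - γ) • (q - μ) + γ • (p j - μ) := by
            rw [hqsum]
            module
          rw [hdecomp]
          have hpjμ : ‖p j - μ‖ ≤ 2 := by
            calc ‖p j - μ‖ ≤ ‖p j‖ + ‖μ‖ := norm_sub_le _ _
            _ ≤ 2 := by linarith [hp j]
          have hexp : ‖(1 - γ) • (q - μ) + γ • (p j - μ)‖ ^ 2
              = ‖(1 - γ) • (q - μ)‖ ^ 2 + 2 * inner ℝ ((1 - γ) • (q - μ)) (γ • (p j - μ))
                + ‖γ • (p j - μ)‖ ^ 2 := norm_add_sq_real _ _
          have hin : inner ℝ ((1 - γ) • (q - μ)) (γ • (p j - μ)) ≤ (0:ℝ) := by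
            rw [real_inner_smul_left, real_inner_smul_right]
            have h01 : 0 ≤ 1 - γ := by linarith
            have h2 : (0:ℝ) ≤ (1 - γ) * γ := mul_nonneg h01 hγpos.le
            nlinarith [h2, hjle, mul_nonpos_of_nonneg_of_nonpos h2 hjle]
          have hn1 : ‖(1 - γ) • (q - μ)‖ ^ 2 = (1 - γ) ^ 2 * ‖q - μ‖ ^ 2 := by
            rw [norm_smul, Real.norm_eq_abs, abs_of_nonneg (by linarith : (0:ℝ) ≤ 1 - γ)]
            ring
          have hn2 : ‖γ • (p j - μ)‖ ^ 2 = γ ^ 2 * ‖p j - μ‖ ^ 2 := by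
            rw [norm_smul, Real.norm_eq_abs, abs_of_nonneg (le_of_lt hγpos)]
            ring
          have hfinal : (1 - γ) ^ 2 * (4 / t) + γ ^ 2 * 4 ≤ 4 / ((t:ℝ) + 1) := by
            rw [hγ]
            have heq : (1 - 1/((t:ℝ)+1)) ^ 2 * (4 / t) + (1/((t:ℝ)+1)) ^ 2 * 4
                = 4 / ((t:ℝ) + 1) := by
              field_simp
              ring
            linarith [heq]
          have hbound : ‖(1 - γ) • (q - μ) + γ • (p j - μ)‖ ^ 2
              ≤ (1 - γ) ^ 2 * (4 / t) + γ ^ 2 * 4 := by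
            rw [hexp, hn1, hn2]
            have h01 : (0:ℝ) ≤ (1 - γ)^2 := sq_nonneg _
            have hpj2 : ‖p j - μ‖ ^ 2 ≤ 4 := by nlinarith [norm_nonneg (p j - μ)]
            nlinarith [sq_nonneg γ]
          push_cast
          calc ‖(1 - γ) • (q - μ) + γ • (p j - μ)‖ ^ 2 ≤ _ := hbound
          _ ≤ 4 / ((t:ℝ) + 1) := hfinal
  -- conclusion
  set t : ℕ := ⌈(4:ℝ) / ε⌉₊ with htdef
  have ht4 : (4:ℝ) / ε ≤ t := Nat.le_ceil _
  have ht1 : 1 ≤ t := by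
    rw [htdef]
    exact Nat.one_le_ceil_iff.mpr (by positivity)
  have htposR : (0:ℝ) < t := by
    have : (4:ℝ)/ε > 0 := by positivity
    linarith
  obtain ⟨u, hu0, hu1, hcard, hnorm⟩ := key t ht1
  refine ⟨u, hu0, ?_, hu1, ?_, ?_⟩
  · intro i
    calc u i ≤ ∑ k, u k := Finset.single_le_sum (fun k _ => hu0 k) (Finset.mem_univ i)
    _ = 1 := hu1
  · have hlt : (t:ℝ) < 4 / ε + 1 := Nat.ceil_lt_add_one (by positivity)
    have h4 : (1:ℝ) ≤ 4 / ε := by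
      rw [le_div_iff₀ hε0]; linarith
    have : (t:ℝ) ≤ 8 / ε := by
      have : 4 / ε + 1 ≤ 8 / ε := by
        have : (8:ℝ)/ε = 4/ε + 4/ε := by ring
        linarith
      linarith
    calc ((Finset.univ.filter fun i => u i ≠ 0).card : ℝ) ≤ t := by exact_mod_cast hcard
    _ ≤ 8 / ε := this
  · have hrw : (∑ i, (w i - u i) • p i) = -((∑ i, u i • p i) - μ) := by
      simp only [sub_smul, Finset.sum_sub_distrib, ← hμ]
      abel
    rw [hrw, norm_neg]
    calc ‖(∑ i, u i • p i) - μ‖ ^ 2 ≤ 4 / t := hnorm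
    _ ≤ ε := by
      rw [div_le_iff₀ htposR]
      calc (4:ℝ) ≤ ε * (4/ε) := by rw [mul_div_cancel₀]; exact ne_of_gt hε0
      _ ≤ ε * t := by nlinarith
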